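/- Fix ρ > 0 and L > 0, and let W : ℝ → [0, ∞) be L-Lipschitz with W(x) = 0 for |x| > ρ. There exists a constant C = C(ρ, L) such that for every integer T ≥ 2 and every real B > 0 with BT ≥ 1, setting T₀ = ⌊(T−1)/2⌋, λ_s = 2πs/T and Π₁ = [−π, −λ₁) ∪ [λ₁, π): for every θ ∈ [−π, π], | (2π/(B·T)) · Σ_{s = −T₀, s ≠ 0}^{T₀} W((θ − λ_s)/B) − (1/B) · ∫_{Π₁} W((θ − λ)/B) dλ | ≤ C/(T·B). -/

import Mathlib

open MeasureTheory
open scoped Real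

lemma pos_side (ρ L : ℝ) (hρ : 0 < ρ) (hL : 0 < L) (W : ℝ → ℝ)
    (hW0 : ∀ x, 0 ≤ W x) (hlip : ∀ x y, |W x - W y| ≤ L * |x - y|)
    (hsupp : ∀ x, ρ < |x| → W x = 0)
    (T : ℕ) (hT : 2 ≤ T) (B : ℝ) (hB : 0 < B) (θ : ℝ) :
    |(∑ i ∈ Finset.range ((T-1)/2), (2*π/T) * W ((θ - 2*π/T*(i+1))/B)) -
        ∫ lam in Set.Ico (2*π/(T:ℝ)) π, W ((θ - lam)/B)|
      ≤ L/B*(2*π/T)*(2*ρ*B+2*(2*π/T)) + 3*L*ρ*(2*π/T) := by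
  have hWbdd : ∀ x, |W x| ≤ 3*L*ρ := by
    intro x
    by_cases hx : ρ < |x|
    · rw [hsupp x hx, abs_zero]; positivity
    · push_neg at hx
      have h2 : ρ < |2*ρ| := by rw [abs_of_pos (by linarith)]; linarith
      have := hlip x (2*ρ)
      rw [hsupp _ h2, sub_zero] at this
      calc |W x| ≤ L * |x - 2*ρ| := this
        _ ≤ L * (3*ρ) := by
            have : |x - 2*ρ| ≤ |x| + |2*ρ| := abs_sub x (2*ρ)
            nlinarith [abs_of_pos (show (0:ℝ) < 2*ρ by linarith)]
        _ = 3*L*ρ := by ring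
  have hWc : Continuous W := by
    have : LipschitzWith (Real.toNNReal L) W :=
      LipschitzWith.of_dist_le_mul (fun x y => by
        simpa [Real.dist_eq, Real.coe_toNNReal L hL.le] using hlip x y)
    exact this.continuous
  set n : ℕ := (T-1)/2 with hn
  set h : ℝ := 2*π/T with hh
  set f : ℝ → ℝ := fun lam => W ((θ - lam)/B) with hf
  have hfc : Continuous f := hWc.comp (by continuity)
  have hTpos : (0:ℝ) < T := by positivity
  have hhpos : 0 < h := by positivity
  -- nat facts
  have hnat1 : 2*n ≤ T := by omega
  have hnat2 : T ≤ 2*(n+1) := by omega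
  have hnπ : h * n ≤ π := by
    rw [hh]; rw [div_mul_eq_mul_div, div_le_iff₀ hTpos]
    have : (2*(n:ℝ)) ≤ T := by exact_mod_cast hnat1
    nlinarith [Real.pi_pos]
  have hπn1 : π ≤ h * (n+1) := by
    rw [hh, div_mul_eq_mul_div, le_div_iff₀ hTpos]
    have : (T:ℝ) ≤ 2*((n:ℝ)+1) := by exact_mod_cast hnat2
    nlinarith [Real.pi_pos]
  have hhπ : h ≤ π := by
    rw [hh, div_le_iff₀ hTpos]
    have : (2:ℝ) ≤ T := by exact_mod_cast hT
    nlinarith [Real.pi_pos]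
  have hρB : 0 < ρ*B := mul_pos hρ hB
  set a : ℕ → ℝ := fun i => min (h*(i+1)) π with ha
  have ha0 : a 0 = h := by simp [ha]; exact hhπ
  have han : a n = π := by
    simp only [ha]
    exact min_eq_right (by push_cast; linarith)
  have hamono : ∀ i, a i ≤ a (i+1) := by
    intro i
    apply min_le_min _ le_rfl
    push_cast
    nlinarith
  have halen : ∀ i, a (i+1) - a i ≤ h := by
    intro i
    have hub : a (i+1) ≤ h*((i:ℝ)+1) + h :=
      min_le_of_left_le (le_of_eq (by push_cast; ring))
    rcases min_cases (h*((i:ℝ)+1)) π with ⟨he, _⟩ | ⟨he, hle⟩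
    · have hai' : a i = h*((i:ℝ)+1) := he
      linarith
    · have hai' : a i = π := he
      have := min_le_right (h*((i:ℝ)+1+1)) π
      have h2 : a (i+1) ≤ π := min_le_right _ _
      linarith
  have hai : ∀ i < n, a i = h*(i+1) := by
    intro i hi
    apply min_eq_left
    have : h*((i:ℝ)+1) ≤ h*n := by
      have : ((i:ℝ)+1) ≤ n := by exact_mod_cast hi
      nlinarith
    linarith
  -- integrability
  have hint : ∀ u v : ℝ, IntervalIntegrable f volume u v :=
    fun u v => hfc.intervalIntegrable u v
  set g : ℝ → ℝ := Set.indicator (Set.Icc (θ-ρ*B-h) (θ+ρ*B+h)) (fun _ => L/B*h) with hg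
  have hgmeas : MeasurableSet (Set.Icc (θ-ρ*B-h) (θ+ρ*B+h)) := measurableSet_Icc
  have hgint : Integrable g := by
    apply (integrable_indicator_iff hgmeas).2
    exact integrableOn_const (by rw [Real.volume_Icc]; exact ENNReal.ofReal_ne_top) enorm_ne_top
  have hgnonneg : ∀ x, 0 ≤ g x := fun x => Set.indicator_nonneg (fun _ _ => by positivity) x
  have hgII : ∀ u v : ℝ, IntervalIntegrable g volume u v := fun u v => hgint.intervalIntegrable
  have htelef : ∑ i ∈ Finset.range n, ∫ x in (a i)..(a (i+1)), f x = ∫ x in h..π, f x := by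
    rw [intervalIntegral.sum_integral_adjacent_intervals (fun k _ => hint _ _), ha0, han]
  have hteleg : ∑ i ∈ Finset.range n, ∫ x in (a i)..(a (i+1)), g x = ∫ x in h..π, g x := by
    rw [intervalIntegral.sum_integral_adjacent_intervals (fun k _ => hgII _ _), ha0, han]
  have hIco : ∫ lam in Set.Ico h π, f lam = ∫ lam in h..π, f lam := by
    rw [intervalIntegral.integral_of_le hhπ, integral_Ioc_eq_integral_Ioo,
      integral_Ico_eq_integral_Ioo]
  have key : ∀ i ∈ Finset.range n,
      |h * f (h*((i:ℝ)+1)) - ∫ x in (a i)..(a (i+1)), f x|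
        ≤ (∫ x in (a i)..(a (i+1)), g x) + (h - (a (i+1) - a i)) * (3*L*ρ) := by
    intro i hi
    have hi' : i < n := Finset.mem_range.1 hi
    have hail : a i = h*((i:ℝ)+1) := hai i hi'
    have hle : a i ≤ a (i+1) := hamono i
    set p := h*((i:ℝ)+1) with hp
    have hpt : ∀ x ∈ Set.Icc (a i) (a (i+1)), |f p - f x| ≤ g x := by
      intro x hx
      have hx1 : p ≤ x := hail ▸ hx.1
      have hx2 : x ≤ p + h := by
        have : a (i+1) ≤ p + h := min_le_of_left_le (le_of_eq (by rw [hp]; push_cast; ring))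
        linarith [hx.2]
      by_cases hxs : x ∈ Set.Icc (θ-ρ*B-h) (θ+ρ*B+h)
      · rw [hg, Set.indicator_of_mem hxs]
        calc |f p - f x| ≤ L * |(θ-p)/B - (θ-x)/B| := hlip _ _
          _ = L/B * |x - p| := by
              rw [div_sub_div_same, show θ-p-(θ-x) = x-p by ring, abs_div, abs_of_pos hB]
              ring
          _ ≤ L/B * h := by
              have : |x - p| ≤ h := by rw [abs_of_nonneg (by linarith)]; linarith
              have hLB : 0 ≤ L/B := by positivity
              nlinarith
      · rw [hg, Set.indicator_of_notMem hxs]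
        simp only [Set.mem_Icc, not_and_or, not_le] at hxs
        have hfx : f x = 0 := by
          apply hsupp
          rw [abs_div, abs_of_pos hB, lt_div_iff₀ hB]
          rcases hxs with hc | hc
          · rw [abs_of_pos (by linarith)]; linarith
          · rw [abs_of_neg (by linarith)]; linarith
        have hfp : f p = 0 := by
          apply hsupp
          rw [abs_div, abs_of_pos hB, lt_div_iff₀ hB]
          rcases hxs with hc | hc
          · rw [abs_of_pos (by linarith)]; linarith
          · rw [abs_of_neg (by linarith)]; linarith
        rw [hfx, hfp]; simp
    have e1 : |∫ x in (a i)..(a (i+1)), (f p - f x)| ≤ ∫ x in (a i)..(a (i+1)), g x := by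
      refine le_trans (intervalIntegral.abs_integral_le_integral_abs hle) ?_
      exact intervalIntegral.integral_mono_on hle
        (((continuous_const.sub hfc).abs).intervalIntegrable _ _) (hgII _ _) hpt
    have expand : h * f p - ∫ x in (a i)..(a (i+1)), f x
        = (∫ x in (a i)..(a (i+1)), (f p - f x)) + (h - (a (i+1) - a i)) * f p := by
      rw [intervalIntegral.integral_sub (intervalIntegrable_const) (hint _ _),
          intervalIntegral.integral_const, smul_eq_mul]
      ring
    rw [expand]
    refine le_trans (abs_add_le _ _) (add_le_add e1 ?_)
    have hlen : 0 ≤ h - (a (i+1) - a i) := by linarith [halen i]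
    rw [abs_mul, abs_of_nonneg hlen]
    exact mul_le_mul_of_nonneg_left (hWbdd _) hlen
  have hgtot : ∫ x in h..π, g x ≤ L/B*h*(2*ρ*B+2*h) := by
    rw [intervalIntegral.integral_of_le hhπ]
    refine le_trans (setIntegral_le_integral hgint (Filter.Eventually.of_forall hgnonneg)) ?_
    rw [hg, integral_indicator_const _ hgmeas, measureReal_def, Real.volume_Icc, smul_eq_mul,
        ENNReal.toReal_ofReal (by linarith : (0:ℝ) ≤ θ+ρ*B+h - (θ-ρ*B-h))]
    exact le_of_eq (by ring)
  have hsumlen : ∑ i ∈ Finset.range n, (h - (a (i+1) - a i)) = n*h - (π - h) := by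
    rw [Finset.sum_sub_distrib, Finset.sum_const, Finset.card_range, Finset.sum_range_sub a n,
        ha0, han, nsmul_eq_mul]
  have main : |(∑ i ∈ Finset.range n, h * f (h*((i:ℝ)+1))) - ∫ lam in Set.Ico h π, f lam|
      ≤ L/B*h*(2*ρ*B+2*h) + 3*L*ρ*h := by
    rw [hIco, ← htelef, ← Finset.sum_sub_distrib]
    refine le_trans (Finset.abs_sum_le_sum_abs _ _) ?_
    refine le_trans (Finset.sum_le_sum key) ?_
    rw [Finset.sum_add_distrib, hteleg, ← Finset.sum_mul, hsumlen]
    have h3 : 0 ≤ 3*L*ρ := by positivity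
    have h4 : ((n:ℝ)*h - (π - h)) * (3*L*ρ) ≤ h*(3*L*ρ) :=
      mul_le_mul_of_nonneg_right (by linarith) h3
    linarith [hgtot]
  exact main


/-- Riemann-sum discretization error, uniform in the target frequency `θ`: the kernel sum over
the nonzero Fourier frequencies differs from the corresponding integral over
`Π₁ = [−π, −λ₁) ∪ [λ₁, π)` by at most `C/(TB)`. -/
theorem stmt_17
    (ρ L : ℝ) (hρ : 0 < ρ) (hL : 0 < L) :
    ∃ C : ℝ, ∀ W : ℝ → ℝ,
      (∀ x, 0 ≤ W x) → (∀ x y, |W x - W y| ≤ L * |x - y|) → (∀ x, ρ < |x| → W x = 0) →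
      ∀ T : ℕ, 2 ≤ T → ∀ B : ℝ, 0 < B → 1 ≤ B * T → ∀ θ ∈ Set.Icc (-π) π,
        let T₀ : ℤ := (((T - 1) / 2 : ℕ) : ℤ)
        |(2 * π / (B * T)) *
              ∑ s ∈ (Finset.Icc (-T₀) T₀).filter (fun s : ℤ => s ≠ 0),
                W ((θ - 2 * π * (s : ℝ) / (T : ℝ)) / B) -
            (1 / B) *
              ∫ lam in Set.Ico (-π) (-(2 * π / (T : ℝ))) ∪ Set.Ico (2 * π / (T : ℝ)) π,
                W ((θ - lam) / B)|
          ≤ C / (T * B) := by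
  refine ⟨20*π*L*ρ + 16*π^2*L, ?_⟩
  intro W hW0 hlip hsupp T hT B hB hBT θ hθ T₀
  have hWc : Continuous W := by
    have : LipschitzWith (Real.toNNReal L) W :=
      LipschitzWith.of_dist_le_mul (fun x y => by
        simpa [Real.dist_eq, Real.coe_toNNReal L hL.le] using hlip x y)
    exact this.continuous
  set n : ℕ := (T-1)/2 with hn
  have hT₀ : T₀ = (n:ℤ) := rfl
  set h : ℝ := 2*π/(T:ℝ) with hh
  set f : ℝ → ℝ := fun lam => W ((θ - lam)/B) with hf
  have hfc : Continuous f := hWc.comp (by continuity)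
  have hTpos : (0:ℝ) < T := by positivity
  have hhpos : 0 < h := by positivity
  have hhπ : h ≤ π := by
    rw [hh, div_le_iff₀ hTpos]
    have : (2:ℝ) ≤ T := by exact_mod_cast hT
    nlinarith [Real.pi_pos]
  -- sum splitting
  have hsplit_set : (Finset.Icc (-T₀) T₀).filter (fun s : ℤ => s ≠ 0)
      = (Finset.Icc 1 T₀) ∪ (Finset.Icc (-T₀) (-1)) := by
    ext s
    simp only [Finset.mem_filter, Finset.mem_Icc, Finset.mem_union]
    omega
  have hdisj : Disjoint (Finset.Icc (1:ℤ) T₀) (Finset.Icc (-T₀) (-1)) := by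
    rw [Finset.disjoint_left]
    intro s hs hs'
    simp only [Finset.mem_Icc] at hs hs'
    omega
  have hposidx : ∀ F : ℤ → ℝ, ∑ s ∈ Finset.Icc (1:ℤ) T₀, F s
      = ∑ i ∈ Finset.range n, F ((i:ℤ)+1) := by
    intro F
    refine Finset.sum_nbij' (fun s => (s-1).toNat) (fun i => (i:ℤ)+1) ?_ ?_ ?_ ?_ ?_
    · intro a ha; simp only [Finset.mem_Icc, hT₀] at ha; simp only [Finset.mem_range]; omega
    · intro a ha; simp only [Finset.mem_range] at ha; simp only [Finset.mem_Icc, hT₀]; omega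
    · intro a ha; simp only [Finset.mem_Icc, hT₀] at ha; omega
    · intro a ha; simp only [Finset.mem_range] at ha; omega
    · intro a ha; simp only [Finset.mem_Icc, hT₀] at ha; congr 1; push_cast; omega
  have hnegidx : ∀ F : ℤ → ℝ, ∑ s ∈ Finset.Icc (-T₀) (-1), F s
      = ∑ i ∈ Finset.range n, F (-((i:ℤ)+1)) := by
    intro F
    refine Finset.sum_nbij' (fun s => (-s-1).toNat) (fun i => -((i:ℤ)+1)) ?_ ?_ ?_ ?_ ?_
    · intro a ha; simp only [Finset.mem_Icc, hT₀] at ha; simp only [Finset.mem_range]; omega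
    · intro a ha; simp only [Finset.mem_range] at ha; simp only [Finset.mem_Icc, hT₀]; omega
    · intro a ha; simp only [Finset.mem_Icc, hT₀] at ha; omega
    · intro a ha; simp only [Finset.mem_range] at ha; omega
    · intro a ha; simp only [Finset.mem_Icc, hT₀] at ha; congr 1; push_cast; omega
  set F : ℤ → ℝ := fun s => W ((θ - 2*π*(s:ℝ)/(T:ℝ))/B) with hF
  have hsum : ∑ s ∈ (Finset.Icc (-T₀) T₀).filter (fun s : ℤ => s ≠ 0), F s
      = (∑ i ∈ Finset.range n, W ((θ - h*((i:ℝ)+1))/B))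
        + (∑ i ∈ Finset.range n, W ((θ + h*((i:ℝ)+1))/B)) := by
    rw [hsplit_set, Finset.sum_union hdisj, hposidx F, hnegidx F]
    congr 1
    · apply Finset.sum_congr rfl
      intro i _
      simp only [hF]
      congr 2
      push_cast
      rw [hh]; ring
    · apply Finset.sum_congr rfl
      intro i _
      simp only [hF]
      congr 2
      push_cast
      rw [hh]; ring
  -- integral splitting
  have hIntOn : ∀ u v : ℝ, IntegrableOn f (Set.Ico u v) :=
    fun u v => (hfc.integrableOn_Icc).mono_set Set.Ico_subset_Icc_self
  have hsplitI : ∫ lam in Set.Ico (-π) (-h) ∪ Set.Ico h π, f lam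
      = (∫ lam in Set.Ico (-π) (-h), f lam) + ∫ lam in Set.Ico h π, f lam := by
    apply setIntegral_union _ measurableSet_Ico (hIntOn _ _) (hIntOn _ _)
    rw [Set.disjoint_left]
    intro x hx hx'
    exact absurd (lt_of_lt_of_le hx.2 (by linarith : -h ≤ h)) (not_lt.2 hx'.1)
  -- negative side conversion
  have hneg : ∫ lam in Set.Ico (-π) (-h), f lam = ∫ lam in Set.Ico h π, f (-lam) := by
    have e1 : ∫ lam in Set.Ico h π, f (-lam) = ∫ x in h..π, f (-x) := by
      rw [intervalIntegral.integral_of_le hhπ, integral_Ioc_eq_integral_Ioo,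
        integral_Ico_eq_integral_Ioo]
    have e2 : (∫ x in h..π, f (-x)) = ∫ x in (-π)..(-h), f x :=
      intervalIntegral.integral_comp_neg f
    have e3 : ∫ lam in Set.Ico (-π) (-h), f lam = ∫ x in (-π)..(-h), f x := by
      rw [intervalIntegral.integral_of_le (by linarith), integral_Ioc_eq_integral_Ioo,
        integral_Ico_eq_integral_Ioo]
    rw [e1, e2, e3]
  -- apply pos_side twice
  have pos1 := pos_side ρ L hρ hL W hW0 hlip hsupp T hT B hB θ
  have pos2 := pos_side ρ L hρ hL (fun x => W (-x)) (fun x => hW0 _)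
    (fun x y => by
      have := hlip (-x) (-y)
      rwa [show -x - -y = -(x-y) by ring, abs_neg] at this)
    (fun x hx => hsupp (-x) (by rwa [abs_neg])) T hT B hB (-θ)
  simp only [show ∀ x:ℝ, -((-θ - x)/B) = (θ+x)/B from fun x => by ring] at pos2
  -- rewrite pos2 integrand to f(-lam)
  have hfneg : ∀ lam : ℝ, W ((θ + lam)/B) = f (-lam) := by
    intro lam; simp only [hf]; congr 1; ring
  simp only [hfneg] at pos2
  set E : ℝ := L/B*h*(2*ρ*B+2*h) + 3*L*ρ*h with hE
  have pos1' : |(∑ i ∈ Finset.range n, h * W ((θ - h*((i:ℝ)+1))/B))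
      - ∫ lam in Set.Ico h π, f lam| ≤ E := pos1
  have pos2' : |(∑ i ∈ Finset.range n, h * f (-(h*((i:ℝ)+1))))
      - ∫ lam in Set.Ico h π, f (-lam)| ≤ E := pos2
  -- assemble
  have hcoef : 2*π/(B*(T:ℝ)) = (1/B) * h := by
    rw [hh]; field_simp
  rw [hcoef]
  have hS : (∑ s ∈ (Finset.Icc (-T₀) T₀).filter (fun s : ℤ => s ≠ 0),
      W ((θ - 2*π*(s:ℝ)/(T:ℝ))/B)) = (∑ i ∈ Finset.range n, W ((θ - h*((i:ℝ)+1))/B))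
        + (∑ i ∈ Finset.range n, W ((θ + h*((i:ℝ)+1))/B)) := hsum
  rw [hS, hsplitI, hneg]
  have step : |(1/B) * h * ((∑ i ∈ Finset.range n, W ((θ - h*((i:ℝ)+1))/B))
        + ∑ i ∈ Finset.range n, W ((θ + h*((i:ℝ)+1))/B))
      - (1/B) * ((∫ lam in Set.Ico h π, f (-lam)) + ∫ lam in Set.Ico h π, f lam)|
      ≤ (1/B) * (2*E) := by
    rw [mul_assoc, ← mul_sub, abs_mul, abs_of_pos (by positivity : (0:ℝ) < 1/B)]
    apply mul_le_mul_of_nonneg_left _ (by positivity : (0:ℝ) ≤ 1/B)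
    have expand : h * ((∑ i ∈ Finset.range n, W ((θ - h*((i:ℝ)+1))/B))
          + ∑ i ∈ Finset.range n, W ((θ + h*((i:ℝ)+1))/B))
        - ((∫ lam in Set.Ico h π, f (-lam)) + ∫ lam in Set.Ico h π, f lam)
      = ((∑ i ∈ Finset.range n, h * W ((θ - h*((i:ℝ)+1))/B)) - ∫ lam in Set.Ico h π, f lam)
        + ((∑ i ∈ Finset.range n, h * f (-(h*((i:ℝ)+1)))) - ∫ lam in Set.Ico h π, f (-lam)) := by
      rw [mul_add, Finset.mul_sum, Finset.mul_sum]
      have : ∀ i ∈ Finset.range n, h * W ((θ + h*((i:ℝ)+1))/B) = h * f (-(h*((i:ℝ)+1))) := by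
        intro i _
        rw [hfneg]
      rw [Finset.sum_congr rfl this]
      ring
    rw [expand]
    refine le_trans (abs_add_le _ _) ?_
    linarith [pos1', pos2']
  refine le_trans step ?_
  -- final numeric bound
  have hTB : (0:ℝ) < (T:ℝ)*B := by positivity
  have e1 : (1/B) * (2*E) = 20*π*L*ρ/((T:ℝ)*B) + 16*π^2*L/(((T:ℝ)*B)^2) := by
    rw [hE, hh]
    field_simp
    ring
  have e2 : 16*π^2*L/(((T:ℝ)*B)^2) ≤ 16*π^2*L/((T:ℝ)*B) := by
    apply div_le_div_of_nonneg_left (by positivity) hTB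
    nlinarith [hBT]
  rw [e1, add_div]
  exact add_le_add le_rfl e2
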